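/- arXiv:1503.06326 — 2 statements merged into one kernel-verified Lean document; each statement's English description precedes it below -/
import Mathlib

section
/- Let η : ℝ³ × ℝ³ → ℝ be continuously differentiable and suppose that for all pairs (v₁, v₂) of orthogonal unit vectors, v₁ × ∂η/∂v₁ + v₂ × ∂η/∂v₂ = 0. Then η is constant on the set Ω = {(v₁, v₂) : ‖v₁‖ = ‖v₂‖ = 1, ⟪v₁, v₂⟫ = 0}. -/
open RealInnerProductSpace

noncomputable section

namespace EtaAux

abbrev E := EuclideanSpace ℝ (Fin 3)

def ip (x y : E) : ℝ := x 0 * y 0 + x 1 * y 1 + x 2 * y 2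

def cp (a b : E) : E :=
  WithLp.toLp 2 ![a 1 * b 2 - a 2 * b 1, a 2 * b 0 - a 0 * b 2, a 0 * b 1 - a 1 * b 0]

lemma cp0 (a b : E) : cp a b 0 = a 1 * b 2 - a 2 * b 1 := rfl
lemma cp1 (a b : E) : cp a b 1 = a 2 * b 0 - a 0 * b 2 := rfl
lemma cp2 (a b : E) : cp a b 2 = a 0 * b 1 - a 1 * b 0 := rfl

lemma cp_eq_cross (a b : E) : cp a b = crossProduct a b := by
  rw [cross_apply]; rfl

lemma inner_eq_ip (x y : E) : ⟪x, y⟫ = ip x y := by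
  simp [PiLp.inner_apply, RCLike.inner_apply, ip, Fin.sum_univ_three]; ring

lemma norm_one_iff (x : E) : ‖x‖ = 1 ↔ ip x x = 1 := by
  rw [← inner_eq_ip]
  constructor
  · intro h; rw [real_inner_self_eq_norm_mul_norm, h]; ring
  · intro h
    have h2 : ‖x‖ * ‖x‖ = 1 := by rw [← real_inner_self_eq_norm_mul_norm, h]
    nlinarith [norm_nonneg x]

lemma ext3 {x y : E} (h0 : x 0 = y 0) (h1 : x 1 = y 1) (h2 : x 2 = y 2) :
    x = y := by
  refine PiLp.ext fun i => ?_
  fin_cases i <;> simpa [Fin.zero_eta, Fin.mk_one, Fin.reduceFinMk]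

def rot (ω : E) (t : ℝ) (x : E) : E :=
  Real.cos t • x + Real.sin t • cp ω x + ((1 - Real.cos t) * ip ω x) • ω

lemma rot_apply (ω : E) (t : ℝ) (x : E) (i : Fin 3) :
    rot ω t x i = Real.cos t * x i + Real.sin t * cp ω x i
      + (1 - Real.cos t) * ip ω x * ω i := rfl

lemma rot_zero (ω x : E) : rot ω 0 x = x := by
  simp [rot]

lemma hasDerivAt_rot (ω : E) (hω : ip ω ω = 1) (x : E) (t : ℝ) :
    HasDerivAt (fun s => rot ω s x) (cp ω (rot ω t x)) t := by
  have key : (-Real.sin t) • x + Real.cos t • cp ω x + (Real.sin t * ip ω x) • ω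
      = cp ω (rot ω t x) := by
    refine PiLp.ext fun i => ?_
    simp only [ip] at hω
    fin_cases i <;>
      simp only [Fin.zero_eta, Fin.mk_one, Fin.reduceFinMk, PiLp.add_apply,
        PiLp.smul_apply, smul_eq_mul, rot_apply, cp0, cp1, cp2, ip]
    · linear_combination (Real.sin t * x 0) * hω
    · linear_combination (Real.sin t * x 1) * hω
    · linear_combination (Real.sin t * x 2) * hω
  rw [← key]
  refine HasDerivAt.add (HasDerivAt.add ?_ ?_) ?_
  · exact (Real.hasDerivAt_cos t).smul_const x
  · exact (Real.hasDerivAt_sin t).smul_const _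
  · have h1 : HasDerivAt (fun s => (1 - Real.cos s) * ip ω x)
        (Real.sin t * ip ω x) t := by
      have := ((hasDerivAt_const t (1:ℝ)).sub (Real.hasDerivAt_cos t)).mul_const (ip ω x)
      simpa using this
    exact h1.smul_const ω

lemma ip_rot (ω : E) (hω : ip ω ω = 1) (x y : E) (t : ℝ) :
    ip (rot ω t x) (rot ω t y) = ip x y := by
  have hf : ∀ s : ℝ, HasDerivAt (fun u => ⟪rot ω u x, rot ω u y⟫) 0 s := by
    intro s
    have := HasDerivAt.inner ℝ (hasDerivAt_rot ω hω x s) (hasDerivAt_rot ω hω y s)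
    refine this.congr_deriv ?_
    rw [inner_eq_ip, inner_eq_ip]
    simp only [ip, cp0, cp1, cp2]
    ring
  have hconst : (fun s => ⟪rot ω s x, rot ω s y⟫) t
      = (fun s => ⟪rot ω s x, rot ω s y⟫) 0 :=
    is_const_of_deriv_eq_zero (fun s => (hf s).differentiableAt)
      (fun s => (hf s).deriv) t 0
  simp only [rot_zero] at hconst
  rw [← inner_eq_ip, hconst, inner_eq_ip]

lemma inner_gradient_fst (η : E × E → ℝ) (hη : ContDiff ℝ 1 η) (u₁ u₂ h : E) :
    ⟪gradient (fun x => η (x, u₂)) u₁, h⟫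
      = fderiv ℝ η (u₁, u₂) (h, 0) := by
  have hdiff : DifferentiableAt ℝ η (u₁, u₂) := (hη.differentiable one_ne_zero) _
  have hcomp : HasFDerivAt (fun x : E => η (x, u₂))
      ((fderiv ℝ η (u₁, u₂)).comp (ContinuousLinearMap.inl ℝ E E)) u₁ :=
    hdiff.hasFDerivAt.comp u₁ ((hasFDerivAt_id u₁).prodMk (hasFDerivAt_const u₂ u₁))
  rw [gradient, hcomp.fderiv, InnerProductSpace.toDual_symm_apply]
  rfl

lemma inner_gradient_snd (η : E × E → ℝ) (hη : ContDiff ℝ 1 η) (u₁ u₂ h : E) :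
    ⟪gradient (fun y => η (u₁, y)) u₂, h⟫
      = fderiv ℝ η (u₁, u₂) (0, h) := by
  have hdiff : DifferentiableAt ℝ η (u₁, u₂) := (hη.differentiable one_ne_zero) _
  have hcomp : HasFDerivAt (fun y : E => η (u₁, y))
      ((fderiv ℝ η (u₁, u₂)).comp (ContinuousLinearMap.inr ℝ E E)) u₂ :=
    hdiff.hasFDerivAt.comp u₂ ((hasFDerivAt_const u₁ u₂).prodMk (hasFDerivAt_id u₂))
  rw [gradient, hcomp.fderiv, InnerProductSpace.toDual_symm_apply]
  rfl

lemma eta_rot (η : E × E → ℝ) (hη : ContDiff ℝ 1 η)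
    (hpde : ∀ v₁ v₂ : E, ‖v₁‖ = 1 → ‖v₂‖ = 1 → ⟪v₁, v₂⟫ = 0 →
      (WithLp.toLp 2 (crossProduct v₁ ((gradient (fun x => η (x, v₂)) v₁ : E))) : E) +
        WithLp.toLp 2 (crossProduct v₂ ((gradient (fun y => η (v₁, y)) v₂ : E))) = 0)
    (ω v₁ v₂ : E) (hω : ip ω ω = 1) (h1 : ip v₁ v₁ = 1) (h2 : ip v₂ v₂ = 1)
    (h12 : ip v₁ v₂ = 0) (t : ℝ) :
    η (rot ω t v₁, rot ω t v₂) = η (v₁, v₂) := by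
  have hf : ∀ s : ℝ, HasDerivAt (fun u => η (rot ω u v₁, rot ω u v₂)) 0 s := by
    intro s
    set u₁ := rot ω s v₁ with hu₁
    set u₂ := rot ω s v₂ with hu₂
    have hγ : HasDerivAt (fun u : ℝ => (rot ω u v₁, rot ω u v₂))
        (cp ω u₁, cp ω u₂) s :=
      (hasDerivAt_rot ω hω v₁ s).prodMk (hasDerivAt_rot ω hω v₂ s)
    have hdiff : DifferentiableAt ℝ η (u₁, u₂) := (hη.differentiable one_ne_zero) _
    have hcomp : HasDerivAt (fun u => η (rot ω u v₁, rot ω u v₂))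
        (fderiv ℝ η (u₁, u₂) (cp ω u₁, cp ω u₂)) s :=
      hdiff.hasFDerivAt.comp_hasDerivAt s hγ
    have hval : fderiv ℝ η (u₁, u₂) (cp ω u₁, cp ω u₂) = 0 := by
      set g₁ : E := gradient (fun x => η (x, u₂)) u₁ with hg₁
      set g₂ : E := gradient (fun y => η (u₁, y)) u₂ with hg₂
      have hsplit : fderiv ℝ η (u₁, u₂) (cp ω u₁, cp ω u₂)
          = fderiv ℝ η (u₁, u₂) ((cp ω u₁ : E), (0:E))
            + fderiv ℝ η (u₁, u₂) ((0:E), (cp ω u₂ : E)) := by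
        rw [← ContinuousLinearMap.map_add]
        congr 1
        simp
      have hz := hpde u₁ u₂ ((norm_one_iff u₁).2 (by rw [hu₁, ip_rot ω hω]; exact h1))
        ((norm_one_iff u₂).2 (by rw [hu₂, ip_rot ω hω]; exact h2))
        (by rw [inner_eq_ip, hu₁, hu₂, ip_rot ω hω]; exact h12)
      rw [← cp_eq_cross, ← cp_eq_cross, WithLp.toLp_ofLp, WithLp.toLp_ofLp] at hz
      have hz0 : cp u₁ g₁ 0 + cp u₂ g₂ 0 = 0 := congrArg (fun v : E => v 0) hz
      have hz1 : cp u₁ g₁ 1 + cp u₂ g₂ 1 = 0 := congrArg (fun v : E => v 1) hz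
      have hz2 : cp u₁ g₁ 2 + cp u₂ g₂ 2 = 0 := congrArg (fun v : E => v 2) hz
      rw [hsplit, ← inner_gradient_fst η hη, ← inner_gradient_snd η hη,
        inner_eq_ip, inner_eq_ip, ← hg₁, ← hg₂]
      simp only [ip, cp0, cp1, cp2] at *
      linear_combination ω 0 * hz0 + ω 1 * hz1 + ω 2 * hz2
    rw [hval] at hcomp
    exact hcomp
  have hconst : (fun u => η (rot ω u v₁, rot ω u v₂)) t
      = (fun u => η (rot ω u v₁, rot ω u v₂)) 0 :=
    is_const_of_deriv_eq_zero (fun s => (hf s).differentiableAt)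
      (fun s => (hf s).deriv) t 0
  simpa [rot_zero] using hconst

lemma exists_angle (x y r : ℝ) (hr : 0 ≤ r) (h : x ^ 2 + y ^ 2 = r ^ 2) :
    ∃ θ, x = r * Real.cos θ ∧ y = r * Real.sin θ := by
  rcases eq_or_lt_of_le hr with hr0 | hr0
  · refine ⟨0, ?_, ?_⟩ <;> · simp; nlinarith
  · set c := x / r with hc
    set s := y / r with hs
    have hx : x = r * c := by rw [hc]; field_simp [hr0.ne']
    have hy : y = r * s := by rw [hs]; field_simp [hr0.ne']
    have hcs : c ^ 2 + s ^ 2 = 1 := by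
      rw [hc, hs]; field_simp; linarith [h]
    have hple : -1 ≤ c := by nlinarith
    have hple' : c ≤ 1 := by nlinarith
    by_cases hsn : 0 ≤ s
    · refine ⟨Real.arccos c, ?_, ?_⟩
      · rw [Real.cos_arccos hple hple', ← hx]
      · rw [Real.sin_arccos,
          show 1 - c ^ 2 = s ^ 2 by linarith, Real.sqrt_sq hsn, ← hy]
    · refine ⟨-Real.arccos c, ?_, ?_⟩
      · rw [Real.cos_neg, Real.cos_arccos hple hple', ← hx]
      · rw [Real.sin_neg, Real.sin_arccos,
          show 1 - c ^ 2 = s ^ 2 by linarith, Real.sqrt_sq_eq_abs,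
          abs_of_neg (not_le.1 hsn)]
        rw [hy]; ring

@[simp] lemma vec3_two (a b c : ℝ) : (![a, b, c] : Fin 3 → ℝ) 2 = c := rfl

def e1 : E := WithLp.toLp 2 ![1, 0, 0]
def e2 : E := WithLp.toLp 2 ![0, 1, 0]
def e3 : E := WithLp.toLp 2 ![0, 0, 1]

lemma ip_e1 : ip e1 e1 = 1 := by norm_num [ip, e1]
lemma ip_e2 : ip e2 e2 = 1 := by norm_num [ip, e2]
lemma ip_e3 : ip e3 e3 = 1 := by norm_num [ip, e3]

-- components of rot about the standard axes
lemma rot_e3_0 (t : ℝ) (x : E) :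
    rot e3 t x 0 = Real.cos t * x 0 - Real.sin t * x 1 := by
  simp only [rot_apply, cp0, ip, e3]; norm_num; ring
lemma rot_e3_1 (t : ℝ) (x : E) :
    rot e3 t x 1 = Real.cos t * x 1 + Real.sin t * x 0 := by
  simp only [rot_apply, cp1, ip, e3]; norm_num
lemma rot_e3_2 (t : ℝ) (x : E) : rot e3 t x 2 = x 2 := by
  simp only [rot_apply, cp2, ip, e3]; norm_num; ring

lemma rot_e2_0 (t : ℝ) (x : E) :
    rot e2 t x 0 = Real.cos t * x 0 + Real.sin t * x 2 := by
  simp only [rot_apply, cp0, ip, e2]; norm_num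
lemma rot_e2_1 (t : ℝ) (x : E) : rot e2 t x 1 = x 1 := by
  simp only [rot_apply, cp1, ip, e2]; norm_num; ring
lemma rot_e2_2 (t : ℝ) (x : E) :
    rot e2 t x 2 = Real.cos t * x 2 - Real.sin t * x 0 := by
  simp only [rot_apply, cp2, ip, e2]; norm_num; ring

lemma rot_e1_0 (t : ℝ) (x : E) : rot e1 t x 0 = x 0 := by
  simp only [rot_apply, cp0, ip, e1]; norm_num; ring
lemma rot_e1_1 (t : ℝ) (x : E) :
    rot e1 t x 1 = Real.cos t * x 1 - Real.sin t * x 2 := by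
  simp only [rot_apply, cp1, ip, e1]; norm_num; ring
lemma rot_e1_2 (t : ℝ) (x : E) :
    rot e1 t x 2 = Real.cos t * x 2 + Real.sin t * x 1 := by
  simp only [rot_apply, cp2, ip, e1]; norm_num

lemma key (η : E × E → ℝ) (hη : ContDiff ℝ 1 η)
    (hpde : ∀ v₁ v₂ : E, ‖v₁‖ = 1 → ‖v₂‖ = 1 → ⟪v₁, v₂⟫ = 0 →
      (WithLp.toLp 2 (crossProduct v₁ ((gradient (fun x => η (x, v₂)) v₁ : E))) : E) +
        WithLp.toLp 2 (crossProduct v₂ ((gradient (fun y => η (v₁, y)) v₂ : E))) = 0)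
    (v₁ v₂ : E) (h1 : ip v₁ v₁ = 1) (h2 : ip v₂ v₂ = 1) (h12 : ip v₁ v₂ = 0) :
    η (v₁, v₂) = η (e1, e2) := by
  -- Step 1 : rotate about e3 to put v₁ in the xz-plane
  set r : ℝ := Real.sqrt (v₁ 0 ^ 2 + v₁ 1 ^ 2) with hrdef
  have hr : 0 ≤ r := Real.sqrt_nonneg _
  have hr2 : v₁ 0 ^ 2 + v₁ 1 ^ 2 = r ^ 2 := (Real.sq_sqrt (by positivity)).symm
  obtain ⟨θ₁, hθx, hθy⟩ := exists_angle (v₁ 0) (v₁ 1) r hr hr2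
  set p₁ : E := rot e3 (-θ₁) v₁ with hp₁def
  set p₂ : E := rot e3 (-θ₁) v₂ with hp₂def
  have hstep1 : η (p₁, p₂) = η (v₁, v₂) :=
    eta_rot η hη hpde e3 v₁ v₂ ip_e3 h1 h2 h12 (-θ₁)
  have hp11 : ip p₁ p₁ = 1 := by rw [hp₁def, ip_rot _ ip_e3]; exact h1
  have hp22 : ip p₂ p₂ = 1 := by rw [hp₂def, ip_rot _ ip_e3]; exact h2
  have hp12 : ip p₁ p₂ = 0 := by rw [hp₁def, hp₂def, ip_rot _ ip_e3]; exact h12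
  have hp₁0 : p₁ 0 = r := by
    rw [hp₁def, rot_e3_0, Real.cos_neg, Real.sin_neg, hθx, hθy]
    linear_combination r * (Real.sin_sq_add_cos_sq θ₁)
  have hp₁1 : p₁ 1 = 0 := by
    rw [hp₁def, rot_e3_1, Real.cos_neg, Real.sin_neg, hθx, hθy]; ring
  -- Step 2 : rotate about e2 to send p₁ to e1
  have hru : r ^ 2 + p₁ 2 ^ 2 = 1 ^ 2 := by
    have : ip p₁ p₁ = r ^ 2 + p₁ 2 ^ 2 := by
      simp only [ip, hp₁0, hp₁1]; ring
    rw [this] at hp11; linarith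
  obtain ⟨θ₂, h2x, h2y⟩ := exists_angle r (p₁ 2) 1 zero_le_one hru
  rw [one_mul] at h2x h2y
  set q₁ : E := rot e2 θ₂ p₁ with hq₁def
  set q₂ : E := rot e2 θ₂ p₂ with hq₂def
  have hstep2 : η (q₁, q₂) = η (p₁, p₂) :=
    eta_rot η hη hpde e2 p₁ p₂ ip_e2 hp11 hp22 hp12 θ₂
  have hq22 : ip q₂ q₂ = 1 := by rw [hq₂def, ip_rot _ ip_e2]; exact hp22
  have hq12 : ip q₁ q₂ = 0 := by rw [hq₁def, hq₂def, ip_rot _ ip_e2]; exact hp12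
  have hq₁ : q₁ = e1 := by
    refine ext3 ?_ ?_ ?_
    · rw [hq₁def, rot_e2_0, hp₁0, h2x, h2y]
      show Real.cos θ₂ * Real.cos θ₂ + Real.sin θ₂ * Real.sin θ₂ = 1
      linear_combination Real.sin_sq_add_cos_sq θ₂
    · rw [hq₁def, rot_e2_1, hp₁1]; rfl
    · rw [hq₁def, rot_e2_2, hp₁0, h2x, h2y]
      show Real.cos θ₂ * Real.sin θ₂ - Real.sin θ₂ * Real.cos θ₂ = 0
      ring
  -- Step 3 : rotate about e1 to send q₂ to e2
  have hq₂0 : q₂ 0 = 0 := by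
    have : ip q₁ q₂ = q₂ 0 := by
      rw [hq₁]; simp only [ip, e1]; norm_num
    rw [← this, hq12]
  have hq2u : q₂ 1 ^ 2 + q₂ 2 ^ 2 = 1 ^ 2 := by
    have : ip q₂ q₂ = q₂ 1 ^ 2 + q₂ 2 ^ 2 := by
      simp only [ip, hq₂0]; ring
    rw [this] at hq22; linarith
  obtain ⟨θ₃, h3x, h3y⟩ := exists_angle (q₂ 1) (q₂ 2) 1 zero_le_one hq2u
  rw [one_mul] at h3x h3y
  have hstep3 : η (rot e1 (-θ₃) q₁, rot e1 (-θ₃) q₂) = η (q₁, q₂) := by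
    refine eta_rot η hη hpde e1 q₁ q₂ ip_e1 ?_ hq22 hq12 (-θ₃)
    rw [hq₁]; exact ip_e1
  have hfix : rot e1 (-θ₃) q₁ = e1 := by
    rw [hq₁]
    refine ext3 ?_ ?_ ?_
    · rw [rot_e1_0]
    · rw [rot_e1_1]; show Real.cos (-θ₃) * 0 - Real.sin (-θ₃) * 0 = 0; ring
    · rw [rot_e1_2]; show Real.cos (-θ₃) * 0 + Real.sin (-θ₃) * 0 = 0; ring
  have hq₂e2 : rot e1 (-θ₃) q₂ = e2 := by
    refine ext3 ?_ ?_ ?_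
    · rw [rot_e1_0, hq₂0]; rfl
    · rw [rot_e1_1, Real.cos_neg, Real.sin_neg, h3x, h3y]
      show Real.cos θ₃ * Real.cos θ₃ - -Real.sin θ₃ * Real.sin θ₃ = 1
      linear_combination Real.sin_sq_add_cos_sq θ₃
    · rw [rot_e1_2, Real.cos_neg, Real.sin_neg, h3x, h3y]
      show Real.cos θ₃ * Real.sin θ₃ + -Real.sin θ₃ * Real.cos θ₃ = 0
      ring
  rw [hfix, hq₂e2] at hstep3
  rw [← hstep1, ← hstep2, ← hstep3]

end EtaAux

open EtaAux in
/-- If `η : ℝ³ × ℝ³ → ℝ` is C¹ and satisfies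
`v₁ × ∂η/∂v₁ + v₂ × ∂η/∂v₂ = 0` on all orthonormal pairs `(v₁, v₂)`,
then `η` is constant on the set of orthonormal pairs. -/
theorem eta_constant_on_orthonormal_pairs
    (η : EuclideanSpace ℝ (Fin 3) × EuclideanSpace ℝ (Fin 3) → ℝ)
    (hη : ContDiff ℝ 1 η)
    (hpde : ∀ v₁ v₂ : EuclideanSpace ℝ (Fin 3),
      ‖v₁‖ = 1 → ‖v₂‖ = 1 → ⟪v₁, v₂⟫ = 0 →
      (WithLp.toLp 2 (crossProduct v₁ ((gradient (fun x => η (x, v₂)) v₁ : EuclideanSpace ℝ (Fin 3)))) : EuclideanSpace ℝ (Fin 3)) +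
        WithLp.toLp 2 (crossProduct v₂ ((gradient (fun y => η (v₁, y)) v₂ : EuclideanSpace ℝ (Fin 3)))) = 0) :
    ∀ v₁ v₂ w₁ w₂ : EuclideanSpace ℝ (Fin 3),
      ‖v₁‖ = 1 → ‖v₂‖ = 1 → ⟪v₁, v₂⟫ = 0 →
      ‖w₁‖ = 1 → ‖w₂‖ = 1 → ⟪w₁, w₂⟫ = 0 →
      η (v₁, v₂) = η (w₁, w₂) := by
  intro v₁ v₂ w₁ w₂ hv1 hv2 hv12 hw1 hw2 hw12
  have hv := key η hη hpde v₁ v₂ ((norm_one_iff v₁).1 hv1) ((norm_one_iff v₂).1 hv2)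
    (by rw [← inner_eq_ip]; exact hv12)
  have hw := key η hη hpde w₁ w₂ ((norm_one_iff w₁).1 hw1) ((norm_one_iff w₂).1 hw2)
    (by rw [← inner_eq_ip]; exact hw12)
  rw [hv, hw]
end
end

section
/- Let η : ℝ³ × ℝ³ → ℝ be C¹ and satisfy n₁ × ∂η/∂n₁ + n₂ × ∂η/∂n₂ = 0 for all unit vectors n₁, n₂ ∈ S². Then there exists a C¹ function h : (0,2) → ℝ such that η(n₁, n₂) = h(1 − ⟪n₁, n₂⟫) for all (n₁, n₂) ∈ S² × S² with (⟪n₁, n₂⟫)² ≠ 1. -/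
open RealInnerProductSpace

noncomputable section
namespace EtaRotAux

abbrev E3 := EuclideanSpace ℝ (Fin 3)

def cp (u v : E3) : E3 := WithLp.toLp 2 (crossProduct u v)

lemma cp_apply (u v : E3) :
    cp u v = ![u 1 * v 2 - u 2 * v 1, u 2 * v 0 - u 0 * v 2, u 0 * v 1 - u 1 * v 0] :=
  cross_apply u v

lemma inner3 (x y : E3) : (⟪x, y⟫ : ℝ) = x 0 * y 0 + x 1 * y 1 + x 2 * y 2 := by
  simp [PiLp.inner_apply, Fin.sum_univ_three]
  ring

/-- Rodrigues rotation of `v` about axis `u` by angle `θ`. -/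
def rot (u : E3) (θ : ℝ) (v : E3) : E3 :=
  Real.cos θ • v + Real.sin θ • cp u v + ((1 - Real.cos θ) * ⟪u, v⟫) • u

lemma rot_apply (u : E3) (θ : ℝ) (v : E3) (i : Fin 3) :
    rot u θ v i = Real.cos θ * v i + Real.sin θ * cp u v i
      + (1 - Real.cos θ) * ⟪u, v⟫ * u i := by
  simp [rot, mul_assoc]

lemma norm_one_iff (x : E3) : ‖x‖ = 1 ↔ x 0 ^ 2 + x 1 ^ 2 + x 2 ^ 2 = 1 := by
  have h1 : (⟪x,x⟫:ℝ) = x 0^2+x 1^2+x 2^2 := by rw [inner3]; ring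
  have h2 : (⟪x,x⟫:ℝ) = ‖x‖^2 := real_inner_self_eq_norm_sq x
  constructor
  · intro h; rw [← h1, h2, h, one_pow]
  · intro h
    have : ‖x‖^2 = 1^2 := by rw [← h2, h1, h, one_pow]
    exact (pow_left_inj₀ (norm_nonneg x) zero_le_one two_ne_zero).1 this

lemma inner_rot (u : E3) (hu : ‖u‖ = 1) (θ : ℝ) (v w : E3) :
    (⟪rot u θ v, rot u θ w⟫ : ℝ) = ⟪v, w⟫ := by
  have hN : u 0 ^ 2 + u 1 ^ 2 + u 2 ^ 2 = 1 := (norm_one_iff u).1 hu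
  have ht : Real.cos θ ^ 2 + Real.sin θ ^ 2 = 1 := by
    rw [add_comm]; exact Real.sin_sq_add_cos_sq θ
  simp only [inner3, rot_apply, cp_apply]
  simp only [Matrix.cons_val_zero, Matrix.cons_val_one, Matrix.head_cons,
    Matrix.cons_val_two, Matrix.tail_cons]
  set c := Real.cos θ; set s := Real.sin θ
  linear_combination (s^2*(v 0 * w 0 + v 1 * w 1 + v 2 * w 2)
      + (1-c)^2 * (u 0 * v 0 + u 1 * v 1 + u 2 * v 2) * (u 0 * w 0 + u 1 * w 1 + u 2 * w 2)) * hN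
    + ((v 0 * w 0 + v 1 * w 1 + v 2 * w 2)
      - (u 0 * v 0 + u 1 * v 1 + u 2 * v 2) * (u 0 * w 0 + u 1 * w 1 + u 2 * w 2)) * ht

lemma norm_rot (u : E3) (hu : ‖u‖ = 1) (θ : ℝ) (v : E3) (hv : ‖v‖ = 1) :
    ‖rot u θ v‖ = 1 := by
  have := inner_rot u hu θ v v
  rw [real_inner_self_eq_norm_sq, real_inner_self_eq_norm_sq, hv] at this
  exact (pow_left_inj₀ (norm_nonneg _) zero_le_one two_ne_zero).1 this

lemma cp_cp (u v : E3) : cp u (cp u v) = ((⟪u,v⟫:ℝ)) • u - (u 0^2+u 1^2+u 2^2) • v := by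
  rw [inner3]
  ext i
  fin_cases i <;>
  · simp [cp, cross_apply]
    ring

lemma cp_triple (a b c : E3) : cp a (cp b c) = ((⟪a,c⟫:ℝ)) • b - ((⟪a,b⟫:ℝ)) • c := by
  rw [inner3, inner3]
  ext i
  fin_cases i <;>
  · simp [cp, cross_apply]
    ring

lemma cp_anticomm (a b : E3) : cp a b = - cp b a :=
  by ext i; fin_cases i <;> simp [cp, cross_apply] <;> ring

lemma cp_add (u x y : E3) : cp u (x + y) = cp u x + cp u y := by simp [cp, map_add]
lemma cp_smul (u : E3) (c : ℝ) (x : E3) : cp u (c • x) = c • cp u x := by simp [cp, map_smul]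
lemma cp_sub (u x y : E3) : cp u (x - y) = cp u x - cp u y := by simp [cp, map_sub]

lemma cp_self (u : E3) : cp u u = 0 := by simp [cp, cross_self]

lemma inner_cp_right (a b : E3) : (⟪cp a b, b⟫:ℝ) = 0 := by
  simp only [inner3, cp_apply]
  simp only [Matrix.cons_val_zero, Matrix.cons_val_one, Matrix.head_cons,
    Matrix.cons_val_two, Matrix.tail_cons]
  ring

lemma inner_cp_left (a b : E3) : (⟪cp a b, a⟫:ℝ) = 0 := by
  simp only [inner3, cp_apply]
  simp only [Matrix.cons_val_zero, Matrix.cons_val_one, Matrix.head_cons,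
    Matrix.cons_val_two, Matrix.tail_cons]
  ring

lemma triple (g u r : E3) : (⟪g, cp u r⟫ : ℝ) = ⟪u, cp r g⟫ := by
  simp only [inner3, cp_apply]
  simp only [Matrix.cons_val_zero, Matrix.cons_val_one, Matrix.head_cons,
    Matrix.cons_val_two, Matrix.tail_cons]
  ring

lemma cp_rot (u : E3) (hu : ‖u‖ = 1) (θ : ℝ) (v : E3) :
    cp u (rot u θ v) = (-Real.sin θ) • v + Real.cos θ • cp u v
      + (Real.sin θ * ⟪u, v⟫) • u := by
  have hN : u 0 ^ 2 + u 1 ^ 2 + u 2 ^ 2 = 1 := (norm_one_iff u).1 hu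
  rw [rot, show ∀ x y z : E3, cp u (x + y + z) = cp u x + cp u y + cp u z from
    fun x y z => by simp [cp, map_add]]
  rw [show cp u (Real.cos θ • v) = Real.cos θ • cp u v from cp_smul _ _ _,
    show cp u (Real.sin θ • cp u v) = Real.sin θ • cp u (cp u v) from cp_smul _ _ _,
    show cp u (((1 - Real.cos θ) * ⟪u, v⟫) • u) = ((1 - Real.cos θ) * ⟪u, v⟫) • cp u u
      from cp_smul _ _ _, cp_self, cp_cp, hN, smul_zero]
  module

lemma hasDerivAt_rot (u : E3) (hu : ‖u‖ = 1) (v : E3) (θ : ℝ) :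
    HasDerivAt (fun t => rot u t v) (cp u (rot u θ v)) θ := by
  rw [cp_rot u hu]
  have h1 : HasDerivAt (fun t => Real.cos t • v) ((-Real.sin θ) • v) θ :=
    (Real.hasDerivAt_cos θ).smul_const v
  have h2 : HasDerivAt (fun t => Real.sin t • cp u v) (Real.cos θ • cp u v) θ :=
    (Real.hasDerivAt_sin θ).smul_const (cp u v)
  have h3 : HasDerivAt (fun t => ((1 - Real.cos t) * ⟪u, v⟫) • u)
      ((Real.sin θ * ⟪u, v⟫) • u) θ := by
    have := (((Real.hasDerivAt_cos θ).const_sub 1).mul_const (⟪u, v⟫ : ℝ)).smul_const u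
    simpa using this
  exact (h1.add h2).add h3

lemma rot_zero (u v : E3) : rot u 0 v = v := by simp [rot]

lemma rot_self (u : E3) (hu : ‖u‖ = 1) (θ : ℝ) : rot u θ u = u := by
  have : (⟪u,u⟫:ℝ) = 1 := by
    rw [real_inner_self_eq_norm_sq, hu]; norm_num
  rw [rot, cp_self, this]
  module

lemma grad_split (η : E3 × E3 → ℝ) (hη : ContDiff ℝ 1 η) (p : E3 × E3) (a b : E3) :
    fderiv ℝ η p (a, b) =
      ⟪gradient (fun x => η (x, p.2)) p.1, a⟫ + ⟪gradient (fun y => η (p.1, y)) p.2, b⟫ := by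
  have hd : DifferentiableAt ℝ η p := (hη.differentiable one_ne_zero).differentiableAt
  have h1 : HasFDerivAt (fun x => η (x, p.2))
      ((fderiv ℝ η p).comp (ContinuousLinearMap.inl ℝ E3 E3)) p.1 := by
    have := hd.hasFDerivAt.comp p.1 (hasFDerivAt_prodMk_left (𝕜 := ℝ) p.1 p.2)
    exact this
  have h2 : HasFDerivAt (fun y => η (p.1, y))
      ((fderiv ℝ η p).comp (ContinuousLinearMap.inr ℝ E3 E3)) p.2 := by
    have := hd.hasFDerivAt.comp p.2 (hasFDerivAt_prodMk_right (𝕜 := ℝ) p.1 p.2)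
    exact this
  have g1 : (⟪gradient (fun x => η (x, p.2)) p.1, a⟫ : ℝ) = fderiv ℝ η p (a, 0) := by
    rw [show gradient (fun x => η (x, p.2)) p.1
        = (InnerProductSpace.toDual ℝ E3).symm
            ((fderiv ℝ η p).comp (ContinuousLinearMap.inl ℝ E3 E3))
      from by rw [gradient, h1.fderiv]]
    simp [ContinuousLinearMap.inl]
  have g2 : (⟪gradient (fun y => η (p.1, y)) p.2, b⟫ : ℝ) = fderiv ℝ η p (0, b) := by
    rw [show gradient (fun y => η (p.1, y)) p.2
        = (InnerProductSpace.toDual ℝ E3).symm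
            ((fderiv ℝ η p).comp (ContinuousLinearMap.inr ℝ E3 E3))
      from by rw [gradient, h2.fderiv]]
    simp [ContinuousLinearMap.inr]
  rw [g1, g2, ← map_add]
  norm_num

section Invariance

variable (η : E3 × E3 → ℝ) (hη : ContDiff ℝ 1 η)
  (hpde : ∀ n₁ n₂ : E3, ‖n₁‖ = 1 → ‖n₂‖ = 1 →
      (WithLp.toLp 2 (crossProduct n₁ ((gradient (fun x => η (x, n₂)) n₁ : E3) : E3)) : E3) +
        (WithLp.toLp 2 (crossProduct n₂ ((gradient (fun y => η (n₁, y)) n₂ : E3) : E3)) : E3) = 0)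

include hη hpde in
lemma invariant (u : E3) (hu : ‖u‖ = 1) (n₁ n₂ : E3) (h₁ : ‖n₁‖ = 1) (h₂ : ‖n₂‖ = 1)
    (θ : ℝ) : η (rot u θ n₁, rot u θ n₂) = η (n₁, n₂) := by
  have key : ∀ t : ℝ, HasDerivAt (fun t => η (rot u t n₁, rot u t n₂)) 0 t := by
    intro t
    set r₁ := rot u t n₁ with hr₁def
    set r₂ := rot u t n₂ with hr₂def
    have hr₁ : ‖r₁‖ = 1 := norm_rot u hu t n₁ h₁
    have hr₂ : ‖r₂‖ = 1 := norm_rot u hu t n₂ h₂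
    have curve : HasDerivAt (fun t => (rot u t n₁, rot u t n₂)) (cp u r₁, cp u r₂) t :=
      (hasDerivAt_rot u hu n₁ t).prodMk (hasDerivAt_rot u hu n₂ t)
    have hd : DifferentiableAt ℝ η (r₁, r₂) := (hη.differentiable one_ne_zero).differentiableAt
    have comp := hd.hasFDerivAt.comp_hasDerivAt t curve
    have hval : fderiv ℝ η (r₁, r₂) (cp u r₁, cp u r₂) = 0 := by
      rw [grad_split η hη (r₁, r₂) (cp u r₁) (cp u r₂)]
      have e1 : (⟪gradient (fun x => η (x, r₂)) r₁, cp u r₁⟫:ℝ)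
          = ⟪u, cp r₁ (gradient (fun x => η (x, r₂)) r₁)⟫ := triple _ _ _
      have e2 : (⟪gradient (fun y => η (r₁, y)) r₂, cp u r₂⟫:ℝ)
          = ⟪u, cp r₂ (gradient (fun y => η (r₁, y)) r₂)⟫ := triple _ _ _
      rw [e1, e2, ← inner_add_right]
      have hz : cp r₁ (gradient (fun x => η (x, r₂)) r₁)
          + cp r₂ (gradient (fun y => η (r₁, y)) r₂) = 0 := hpde r₁ r₂ hr₁ hr₂
      rw [hz, inner_zero_right]
    rw [hval] at comp
    exact comp
  have hdiff : Differentiable ℝ (fun t => η (rot u t n₁, rot u t n₂)) :=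
    fun t => (key t).differentiableAt
  have hconst := is_const_of_deriv_eq_zero hdiff (fun t => (key t).deriv) θ 0
  simpa [rot_zero] using hconst

end Invariance

/-- basis expansion: if `u ⊥ v` are unit then `w = ⟪w,u⟫u + ⟪w,v⟫v + ⟪w,u×v⟫(u×v)` -/
lemma expansion (u v : E3) (hu : ‖u‖ = 1) (hv : ‖v‖ = 1) (huv : (⟪u,v⟫:ℝ) = 0) (w : E3) :
    w = (⟪w,u⟫:ℝ) • u + (⟪w,v⟫:ℝ) • v + (⟪w, cp u v⟫:ℝ) • cp u v := by
  have huu : (⟪u,u⟫:ℝ) = 1 := by rw [real_inner_self_eq_norm_sq, hu]; norm_num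
  have hvv : (⟪v,v⟫:ℝ) = 1 := by rw [real_inner_self_eq_norm_sq, hv]; norm_num
  have hvu : (⟪v,u⟫:ℝ) = 0 := by rw [← huv]; exact real_inner_comm u v
  have hev : cp v (cp u v) = u := by rw [cp_triple, hvv, hvu]; module
  have hee : (⟪cp u v, cp u v⟫:ℝ) = 1 := by
    rw [triple (cp u v) u v, hev, huu]
  have hNe : (cp u v) 0^2 + (cp u v) 1^2 + (cp u v) 2^2 = 1 := by
    have h := inner3 (cp u v) (cp u v); rw [hee] at h; linear_combination -h
  have hcc : cp (cp u v) (cp (cp u v) w) = (⟪cp u v, w⟫:ℝ) • cp u v - w := by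
    rw [cp_cp, hNe, one_smul]
  have hew : cp (cp u v) w = (⟪w,u⟫:ℝ) • v - (⟪w,v⟫:ℝ) • u := by
    rw [cp_anticomm, cp_triple]; module
  have heu : cp (cp u v) u = v := by
    rw [cp_anticomm, cp_triple, huv, huu]; module
  have heu2 : cp (cp u v) v = -u := by
    rw [cp_anticomm, cp_triple, hvv, hvu]; module
  have key : cp (cp u v) (cp (cp u v) w) = -((⟪w,u⟫:ℝ) • u) - (⟪w,v⟫:ℝ) • v := by
    rw [hew, cp_sub, cp_smul, cp_smul, heu, heu2]; module
  rw [hcc] at key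
  have hwe : (⟪w, cp u v⟫:ℝ) = ⟪cp u v, w⟫ := real_inner_comm (cp u v) w
  rw [hwe]
  linear_combination (norm := module) -key

lemma exists_cos_sin (a b : ℝ) (h : a^2 + b^2 = 1) :
    ∃ θ : ℝ, Real.cos θ = a ∧ Real.sin θ = b := by
  have habs : ‖(⟨a, b⟩ : ℂ)‖ = 1 := by
    rw [Complex.norm_def, Complex.normSq_mk]
    rw [show a * a + b * b = 1 by nlinarith]
    exact Real.sqrt_one
  have hz : (⟨a, b⟩ : ℂ) ≠ 0 := by
    intro hzz; rw [hzz] at habs; simp at habs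
  exact ⟨Complex.arg ⟨a, b⟩, by rw [Complex.cos_arg hz, habs]; simp,
    by rw [Complex.sin_arg, habs]; simp⟩

def e0 : E3 := EuclideanSpace.single 0 1
def e1 : E3 := EuclideanSpace.single 1 1

lemma e0_apply (i : Fin 3) : e0 i = if i = 0 then 1 else 0 := by
  simp [e0, EuclideanSpace.single_apply]

lemma e1_apply (i : Fin 3) : e1 i = if i = 1 then 1 else 0 := by
  simp [e1, EuclideanSpace.single_apply]

lemma norm_e0 : ‖e0‖ = 1 := by rw [norm_one_iff]; simp [e0_apply]
lemma norm_e1 : ‖e1‖ = 1 := by rw [norm_one_iff]; simp [e1_apply]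

/-- every unit vector can be rotated to `e0`. -/
lemma exists_rot_to_e0 (n : E3) (hn : ‖n‖ = 1) :
    ∃ u θ, ‖u‖ = 1 ∧ rot u θ n = e0 := by
  -- find a unit axis orthogonal to both n and e0
  obtain ⟨u, hu, hun, hue⟩ : ∃ u : E3, ‖u‖ = 1 ∧ (⟪u,n⟫:ℝ) = 0 ∧ (⟪u,e0⟫:ℝ) = 0 := by
    by_cases hc : cp n e0 = 0
    · refine ⟨e1, norm_e1, ?_, ?_⟩
      · have h1 : n 1 = 0 := by
          have := congrArg (fun w : E3 => w 2) hc
          simpa [cp_apply, e0_apply] using this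
        rw [inner3]
        simp [e1_apply, h1]
      · rw [inner3]; simp [e0_apply, e1_apply]
    · refine ⟨‖cp n e0‖⁻¹ • cp n e0, norm_smul_inv_norm hc, ?_, ?_⟩
      · rw [real_inner_smul_left, inner_cp_left]; ring
      · rw [real_inner_smul_left, inner_cp_right]; ring
  set c : ℝ := ⟪e0, n⟫ with hc
  set d : ℝ := ⟪e0, cp u n⟫ with hd
  have hne : (⟪u, e0⟫:ℝ) = 0 := hue
  have hexp := expansion u n hu hn hun e0
  rw [← real_inner_comm e0 u] at hexp
  rw [hne, zero_smul, zero_add] at hexp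
  have hcd : c^2 + d^2 = 1 := by
    have h1 : (⟪e0, e0⟫:ℝ) = 1 := by rw [real_inner_self_eq_norm_sq, norm_e0]; norm_num
    calc c^2 + d^2 = ⟪e0, c • n + d • cp u n⟫ := by
          rw [inner_add_right, real_inner_smul_right, real_inner_smul_right, ← hc, ← hd]; ring
      _ = 1 := by rw [← hexp]; exact h1
  obtain ⟨θ, hcθ, hsθ⟩ := exists_cos_sin c d hcd
  refine ⟨u, θ, hu, ?_⟩
  rw [rot, hcθ, hsθ, hun, mul_zero, zero_smul, add_zero, hexp]

/-- main theorem assembly helpers: rotate second vector about e0 into the canonical position -/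
lemma exists_rot_about_e0 (m : E3) (hm : ‖m‖ = 1) (t : ℝ) (ht : (⟪e0, m⟫:ℝ) = t)
    (ht2 : t^2 < 1) :
    ∃ θ, rot e0 θ m = t • e0 + Real.sqrt (1 - t^2) • e1 := by
  set s : ℝ := Real.sqrt (1 - t^2) with hs
  have hs0 : 0 < s := Real.sqrt_pos.2 (by nlinarith)
  have hss : s^2 = 1 - t^2 := Real.sq_sqrt (by nlinarith)
  have hm0 : m 0 = t := by
    rw [← ht, inner3]; simp [e0_apply]
  have hmm : m 0^2 + m 1^2 + m 2^2 = 1 := (norm_one_iff m).1 hm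
  have h12 : m 1^2 + m 2^2 = s^2 := by
    rw [hss]; linear_combination hmm - (m 0 + t) * hm0
  have hsne : s ≠ 0 := ne_of_gt hs0
  obtain ⟨θ, hcθ, hsθ⟩ := exists_cos_sin (m 1 / s) (-(m 2) / s) (by
    field_simp
    exact h12)
  refine ⟨θ, ?_⟩
  ext i
  have hrhs : ∀ j : Fin 3, (t • e0 + s • e1 : E3) j = t * e0 j + s * e1 j := by
    intro j; simp
  fin_cases i <;>
  · rw [rot_apply, hrhs, hcθ, hsθ, ht]
    simp [cp_apply, e0_apply, e1_apply, hm0]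
    field_simp
    first
    | ring1
    | linear_combination h12

end EtaRotAux

end

open EtaRotAux in
/-- If `η : ℝ³ × ℝ³ → ℝ` is C¹ and satisfies
`n₁ × ∂η/∂n₁ + n₂ × ∂η/∂n₂ = 0` for all unit vectors `n₁, n₂`, then there is a C¹
function `h` on `(0,2)` with `η(n₁,n₂) = h(1 - ⟪n₁,n₂⟫)` whenever `⟪n₁,n₂⟫² ≠ 1`. -/
theorem eta_is_function_of_inner
    (η : EuclideanSpace ℝ (Fin 3) × EuclideanSpace ℝ (Fin 3) → ℝ)
    (hη : ContDiff ℝ 1 η)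
    (hpde : ∀ n₁ n₂ : EuclideanSpace ℝ (Fin 3),
      ‖n₁‖ = 1 → ‖n₂‖ = 1 →
      (WithLp.toLp 2 (crossProduct n₁ ((gradient (fun x => η (x, n₂)) n₁ : EuclideanSpace ℝ (Fin 3))))
          : EuclideanSpace ℝ (Fin 3)) +
        WithLp.toLp 2 (crossProduct n₂ ((gradient (fun y => η (n₁, y)) n₂ : EuclideanSpace ℝ (Fin 3)))) = 0) :
    ∃ h : ℝ → ℝ, ContDiffOn ℝ 1 h (Set.Ioo 0 2) ∧
      ∀ n₁ n₂ : EuclideanSpace ℝ (Fin 3),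
        ‖n₁‖ = 1 → ‖n₂‖ = 1 → (⟪n₁, n₂⟫ : ℝ) ^ 2 ≠ 1 →
        η (n₁, n₂) = h (1 - ⟪n₁, n₂⟫) := by
  refine ⟨fun σ => η (e0, (1-σ) • e0 + Real.sqrt (1-(1-σ)^2) • e1), ?_, ?_⟩
  · -- C¹ smoothness of h on (0,2)
    have hsqrt : ContDiffOn ℝ 1 (fun σ : ℝ => Real.sqrt (1 - (1-σ)^2)) (Set.Ioo 0 2) := by
      apply ContDiffOn.sqrt
      · exact ((contDiff_const.sub
          ((contDiff_const.sub contDiff_id).pow 2)).contDiffOn)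
      · intro x hx
        obtain ⟨hx1, hx2⟩ := hx
        nlinarith
    have hv : ContDiffOn ℝ 1
        (fun σ : ℝ => ((1-σ) • e0 + Real.sqrt (1-(1-σ)^2) • e1 : E3)) (Set.Ioo 0 2) :=
      (((contDiff_const.sub contDiff_id).contDiffOn).smul contDiffOn_const).add
        (hsqrt.smul contDiffOn_const)
    exact hη.comp_contDiffOn (contDiffOn_const.prodMk hv)
  · intro n₁ n₂ h1 h2 hne
    set t : ℝ := ⟪n₁, n₂⟫ with htdef
    have habs : |t| ≤ 1 := by
      have h := abs_real_inner_le_norm n₁ n₂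
      rw [h1, h2, mul_one] at h
      exact h
    have ht2 : t^2 < 1 := by
      rcases lt_or_eq_of_le
        (by nlinarith [sq_abs t, abs_nonneg t, habs] : t^2 ≤ 1) with h | h
      · exact h
      · exact absurd h hne
    obtain ⟨u, θ₁, hu, hrot⟩ := exists_rot_to_e0 n₁ h1
    have hm : ‖rot u θ₁ n₂‖ = 1 := norm_rot u hu θ₁ n₂ h2
    have hstep1 : η (n₁, n₂) = η (e0, rot u θ₁ n₂) := by
      rw [← invariant η hη hpde u hu n₁ n₂ h1 h2 θ₁, hrot]
    have htm : (⟪e0, rot u θ₁ n₂⟫ : ℝ) = t := by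
      rw [← hrot]; exact inner_rot u hu θ₁ n₁ n₂
    obtain ⟨θ₂, hrot2⟩ := exists_rot_about_e0 (rot u θ₁ n₂) hm t htm ht2
    have hstep2 : η (e0, rot u θ₁ n₂) = η (e0, t • e0 + Real.sqrt (1-t^2) • e1) := by
      rw [← invariant η hη hpde e0 norm_e0 e0 (rot u θ₁ n₂) norm_e0 hm θ₂,
        rot_self e0 norm_e0 θ₂, hrot2]
    have hfin : (fun σ => η (e0, (1-σ) • e0 + Real.sqrt (1-(1-σ)^2) • e1)) (1 - t)
        = η (e0, (1-(1-t)) • e0 + Real.sqrt (1-(1-(1-t))^2) • e1) := rfl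
    rw [hstep1, hstep2, hfin, show 1-(1-t) = t from by ring]
end
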